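/- arXiv:0907.2299 — 2 statements merged into one kernel-verified Lean document; each statement's English description precedes it below -/
import Mathlib

section
/- For any finite word w over an alphabet and any infinite sequence of finite words v_n with |v_n| → ∞, the limit superior of the relative frequency fr(w, v_n) is at most 1/p(w), where p(w) is the minimal periodic factor length of w. -/
open Set Filter Topology List

noncomputable section

abbrev I01 : Set ℝ := Set.Icc 0 1

abbrev CI := C(I01, ℝ)

/-- Evaluate `f ∈ C([0,1])` at a real number (via projection onto `[0,1]`;
for `x ∈ [0,1]` this is just `f x`). -/
def evalI (f : CI) (x : ℝ) : ℝ := f (Set.projIcc 0 1 (by norm_num) x)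

/-- The list of gaps between consecutive points. -/
def gaps (l : List ℝ) : List ℝ := List.zipWith (fun a b => b - a) l l.tail

/-- Maximal resolution (maximal gap). -/
def maxGap (l : List ℝ) : ℝ := (gaps l).foldr max 0

/-- Minimal resolution (minimal gap). -/
def minGap (l : List ℝ) : ℝ := (gaps l).foldr min 1

def intDiffs (l : List ℤ) : List ℤ := List.zipWith (fun a b => b - a) l l.tail

/-- Quantitative code of `f` with respect to the discretization `X` and step `h`. -/
def Qcode (f : CI) (X : List ℝ) (h : ℝ) : List ℤ :=
  intDiffs (X.map fun x => ⌊evalI f x / h⌋)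

/-- Qualitative code: the signs of the quantitative code. -/
def qcode (f : CI) (X : List ℝ) (h : ℝ) : List ℤ := (Qcode f X h).map Int.sign

/-- Stretched code: each positive entry `z` of the quantitative code becomes `z` ones
followed by a zero, each negative entry `z` becomes `|z|` minus-ones followed by a zero,
and each zero entry a single zero. -/
def scode (f : CI) (X : List ℝ) (h : ℝ) : List ℤ :=
  (Qcode f X h).flatMap fun z =>
    if 0 < z then List.replicate z.toNat 1 ++ [0]
    else if z < 0 then List.replicate (-z).toNat (-1) ++ [0]
    else [0]

/-- Number of occurrences of the word `w` in the word `v`. -/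
def oc {A : Type*} [DecidableEq A] (w v : List A) : ℕ :=
  ((List.range (v.length - w.length + 1)).filter
    fun j => (v.drop j).take w.length = w).length

/-- Relative frequency of the word `w` in the word `v`. -/
def freq {A : Type*} [DecidableEq A] (w v : List A) : ℝ := (oc w v : ℝ) / v.length

/-- Minimal periodic factor length of `w`. -/
def pmin {A : Type*} [DecidableEq A] (w : List A) : ℕ :=
  sInf {s : ℕ | 0 < s ∧ ∃ u : List A, u.length = s ∧ oc w (w ++ u) = 2}

/-- A discretization system of `[0,1]`. -/
structure DiscretizationSystem where
  X : ℕ → List ℝ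
  sorted : ∀ n, (X n).Chain' (· < ·)
  mem_Icc : ∀ n, ∀ x ∈ X n, x ∈ I01
  head_eq : ∀ n, (X n).head? = some 0
  last_eq : ∀ n, (X n).getLast? = some 1
  nested : ∀ n, ∀ x ∈ X n, x ∈ X (n + 1)
  maxres_to_zero : Tendsto (fun n => maxGap (X n)) atTop (nhds 0)


/-- The set of shifts at which `w` can overlap itself to the right. -/
def Pset {A : Type*} [DecidableEq A] (w : List A) : Set ℕ :=
  {s | 0 < s ∧ ∃ u : List A, u.length = s ∧ (w ++ u).drop s = w}

lemma sub_mem_Pset {A : Type*} [DecidableEq A] {w v : List A} {j j' : ℕ} (hjj : j < j')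
    (hj' : j' ≤ v.length - w.length)
    (h1 : (v.drop j).take w.length = w) (h2 : (v.drop j').take w.length = w) :
    (j' - j) ∈ Pset w := by
  have hl2 : j' + w.length ≤ v.length := by
    have h := congrArg List.length h2
    simp only [List.length_take, List.length_drop] at h
    omega
  refine ⟨by omega, ((v.drop j).drop w.length).take (j' - j), ?_, ?_⟩
  · simp only [List.length_take, List.length_drop]
    omega
  · have hw : w ++ ((v.drop j).drop w.length).take (j' - j)
        = (v.drop j).take (w.length + (j' - j)) := by
      rw [List.take_add, h1]
    rw [hw, List.drop_take, List.drop_drop]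
    have e1 : j + (j' - j) = j' := by omega
    rw [e1]
    have e2 : w.length + (j' - j) - (j' - j) = w.length := by omega
    rw [e2, h2]

lemma Pset_nonempty {A : Type*} [DecidableEq A] (w : List A) (a : A) :
    (Pset w).Nonempty := by
  rcases eq_or_ne w [] with h | h
  · exact ⟨1, one_pos, [a], rfl, by simp [h]⟩
  · exact ⟨w.length, List.length_pos_iff.2 h, w, rfl, List.drop_left⟩

lemma sInfP_spec {A : Type*} [DecidableEq A] (w : List A) (a : A) :
    0 < sInf (Pset w) ∧ ∃ u : List A, u.length = sInf (Pset w) ∧ oc w (w ++ u) = 2 := by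
  have hne := Pset_nonempty w a
  set p := sInf (Pset w) with hp
  obtain ⟨hp0, u, hu, hdrop⟩ := Nat.sInf_mem hne
  rw [← hp] at hp0 hu hdrop
  have hlen : (w ++ u).length - w.length + 1 = p + 1 := by
    simp [List.length_append, hu]
  have hocc : ∀ j ∈ List.range (p + 1),
      (decide (((w ++ u).drop j).take w.length = w)) = (decide (j = 0 ∨ j = p)) := by
    intro j hj
    rw [List.mem_range] at hj
    rw [decide_eq_decide]
    constructor
    · intro hpred
      by_contra hcon
      push_neg at hcon
      obtain ⟨hj0, hjp⟩ := hcon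
      have hjlt : j < p := lt_of_le_of_ne (by omega) hjp
      have h0 : ((w ++ u).drop 0).take w.length = w := by
        simp [List.take_left]
      have hmem : (j - 0) ∈ Pset w :=
        sub_mem_Pset (v := w ++ u) (by omega) (by rw [List.length_append, hu]; omega) h0 hpred
      have := Nat.sInf_le hmem
      omega
    · rintro (rfl | rfl)
      · simp [List.take_left]
      · rw [hdrop, List.take_length]
  refine ⟨hp0, u, hu, ?_⟩
  unfold oc
  rw [hlen, List.filter_congr hocc]
  set M := (List.range (p + 1)).filter (fun j => decide (j = 0 ∨ j = p)) with hM
  have hnodupM : M.Nodup := List.filter_sublist.nodup List.nodup_range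
  have h1 : M ⊆ [0, p] := by
    intro x hx
    rw [hM, List.mem_filter] at hx
    have := of_decide_eq_true hx.2
    simp only [List.mem_cons, List.mem_singleton, List.not_mem_nil]
    tauto
  have h2 : [0, p] ⊆ M := by
    intro x hx
    simp only [List.mem_cons, List.mem_singleton, List.not_mem_nil, or_false] at hx
    rw [hM, List.mem_filter]
    rcases hx with rfl | rfl
    · exact ⟨List.mem_range.mpr (by omega), by simp⟩
    · exact ⟨List.mem_range.mpr (by omega), by simp⟩
  have h0p : (0:ℕ) ≠ p := by omega
  have hnodup2 : ([0, p] : List ℕ).Nodup :=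
    List.nodup_cons.mpr ⟨by simp [h0p], List.nodup_singleton p⟩
  exact ((hnodupM.subperm h1).antisymm (hnodup2.subperm h2)).length_eq

lemma pmin_le_sInfP {A : Type*} [DecidableEq A] (w : List A) (a : A) :
    pmin w ≤ sInf (Pset w) := by
  obtain ⟨h0, u, hu, hoc⟩ := sInfP_spec w a
  exact Nat.sInf_le ⟨h0, u, hu, hoc⟩

lemma pmin_pos {A : Type*} [DecidableEq A] (w : List A) (a : A) : 0 < pmin w := by
  obtain ⟨h0, u, hu, hoc⟩ := sInfP_spec w a
  have hne : {s : ℕ | 0 < s ∧ ∃ u : List A, u.length = s ∧ oc w (w ++ u) = 2}.Nonempty :=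
    ⟨sInf (Pset w), h0, u, hu, hoc⟩
  exact (Nat.sInf_mem hne).1

lemma pmin_le_shift {A : Type*} [DecidableEq A] (w : List A) (a : A) {s : ℕ}
    (hs : s ∈ Pset w) : pmin w ≤ s :=
  (pmin_le_sInfP w a).trans (Nat.sInf_le hs)

lemma oc_le {A : Type*} [DecidableEq A] (w : List A) (a : A) (v : List A) :
    oc w v ≤ v.length / pmin w + 1 := by
  classical
  set p := pmin w with hpdef
  have hp0 : 0 < p := pmin_pos w a
  set L := (List.range (v.length - w.length + 1)).filter
    (fun j => (v.drop j).take w.length = w) with hL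
  have hsub : L.Sublist (List.range (v.length - w.length + 1)) := List.filter_sublist
  have hpair : L.Pairwise (· < ·) := List.pairwise_lt_range.sublist hsub
  have hsep : L.Pairwise (fun x y => x + p ≤ y) := by
    refine hpair.imp_of_mem ?_
    intro x y hx hy hxy
    rw [hL, List.mem_filter, List.mem_range] at hx hy
    have hx2 := of_decide_eq_true hx.2
    have hy2 := of_decide_eq_true hy.2
    have hmem : (y - x) ∈ Pset w :=
      sub_mem_Pset (v := v) hxy (by have h := hy.1; omega) hx2 hy2
    have := pmin_le_shift w a hmem
    omega
  have hmap : (L.map (· / p)).Pairwise (· < ·) := by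
    refine List.Pairwise.map _ ?_ hsep
    intro x y hxy
    calc x / p < x / p + 1 := Nat.lt_succ_self _
    _ = (x + p) / p := (Nat.add_div_right x hp0).symm
    _ ≤ y / p := Nat.div_le_div_right hxy
  have hnodup : (L.map (· / p)).Nodup := hmap.nodup
  have hsubset : (L.map (· / p)) ⊆ List.range (v.length / p + 1) := by
    intro x hx
    rw [List.mem_map] at hx
    obtain ⟨j, hj, rfl⟩ := hx
    rw [hL, List.mem_filter, List.mem_range] at hj
    rw [List.mem_range]
    have : j ≤ v.length := by omega
    have := Nat.div_le_div_right (c := p) this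
    omega
  have := (hnodup.subperm hsubset).length_le
  simp only [List.length_map, List.length_range] at this
  unfold oc
  rw [← hL]
  omega

/-- the limsup of the relative frequency of `w` in any sequence of
words of length tending to infinity is at most `1 / p(w)`. -/
theorem stmt2 {A : Type*} [DecidableEq A] (w : List A) (v : ℕ → List A)
    (hv : Tendsto (fun n => (v n).length) atTop atTop) :
    Filter.limsup (fun n => freq w (v n)) atTop ≤ 1 / (pmin w : ℝ) := by
  classical
  obtain ⟨N, hN⟩ := (hv.eventually_ge_atTop 1).exists
  obtain ⟨a, -⟩ : ∃ a : A, a ∈ v N := List.exists_mem_of_length_pos (by omega)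
  have hp0 : 0 < pmin w := pmin_pos w a
  have hp0' : (0:ℝ) < (pmin w : ℝ) := by exact_mod_cast hp0
  have hple : (fun n => freq w (v n)) ≤ᶠ[atTop]
      fun n => 1/(pmin w : ℝ) + 1/((v n).length : ℝ) := by
    filter_upwards [hv.eventually_ge_atTop 1] with n hn
    have hlen : (0:ℝ) < ((v n).length : ℝ) := by
      have : (1:ℝ) ≤ ((v n).length : ℝ) := by exact_mod_cast hn
      linarith
    have hoc : (oc w (v n) : ℝ) ≤ ((v n).length : ℝ)/(pmin w : ℝ) + 1 := by
      have h := oc_le w a (v n)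
      calc (oc w (v n) : ℝ) ≤ (((v n).length / pmin w + 1 : ℕ) : ℝ) := by exact_mod_cast h
      _ = (((v n).length / pmin w : ℕ) : ℝ) + 1 := by push_cast; ring
      _ ≤ ((v n).length : ℝ)/(pmin w : ℝ) + 1 := by
          have := Nat.cast_div_le (α := ℝ) (m := (v n).length) (n := pmin w)
          linarith
    show (oc w (v n) : ℝ) / ((v n).length : ℝ) ≤ _
    rw [div_le_iff₀ hlen]
    have hexp : (1/(pmin w : ℝ) + 1/((v n).length : ℝ)) * ((v n).length : ℝ)
        = ((v n).length : ℝ)/(pmin w : ℝ) + 1 := by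
      field_simp
    rw [hexp]
    exact hoc
  have htend : Tendsto (fun n => 1/(pmin w : ℝ) + 1/((v n).length : ℝ)) atTop
      (nhds (1/(pmin w : ℝ) + 0)) :=
    tendsto_const_nhds.add (tendsto_one_div_atTop_nhds_zero_nat.comp hv)
  have hcob : IsCoboundedUnder (· ≤ ·) atTop (fun n => freq w (v n)) := by
    apply Filter.IsBoundedUnder.isCoboundedUnder_le
    apply Filter.isBoundedUnder_of
    refine ⟨0, fun n => ?_⟩
    show (0:ℝ) ≤ (oc w (v n) : ℝ) / ((v n).length : ℝ)
    positivity
  calc Filter.limsup (fun n => freq w (v n)) atTop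
      ≤ Filter.limsup (fun n => 1/(pmin w : ℝ) + 1/((v n).length : ℝ)) atTop :=
        Filter.limsup_le_limsup hple hcob htend.isBoundedUnder_le
    _ = 1/(pmin w : ℝ) + 0 := htend.limsup_eq
    _ = 1/(pmin w : ℝ) := add_zero _
end
end

section
/- Let (X_n) be a discretization system of [0,1]. For a residual set of f ∈ C([0,1]), there exist infinitely many n such that |f(x_{i+1}^n) − f(x_i^n)| > h_n for all consecutive points x_i^n, x_{i+1}^n of X_n; consequently the qualitative code q(f,n) contains no symbol 0 for infinitely many n. -/
open Set Filter Topology List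

noncomputable section

/- ## Auxiliary machinery -/

lemma List.chain'_iff_get {α : Type*} {R : α → α → Prop} {l : List α} :
    Chain' R l ↔ ∀ (i : ℕ) (h : i < length l - 1),
      R (get l ⟨i, by omega⟩) (get l ⟨i + 1, by omega⟩) := by
  rw [show Chain' R l ↔ IsChain R l from Iff.rfl, List.isChain_iff_getElem]
  constructor
  · intro h i hi; exact h i (by omega)
  · intro h i hi; exact h i (by omega)

noncomputable def pl : List (ℝ × ℝ) → ℝ → ℝ
  | [], _ => 0
  | [(_, v)], _ => v
  | (p₁, v₁) :: (p₂, v₂) :: rest, x =>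
      if x ≤ p₂ then v₁ + (v₂ - v₁) * (x - p₁) / (p₂ - p₁)
      else pl ((p₂, v₂) :: rest) x

lemma pl_head (p v : ℝ) (rest : List (ℝ × ℝ))
    (hs : (((p,v) :: rest).map Prod.fst).Pairwise (· < ·)) :
    pl ((p,v) :: rest) p = v := by
  rcases rest with _ | ⟨⟨q, w⟩, rest'⟩
  · simp [pl]
  · have hpq : p < q := by
      simp only [map_cons, pairwise_cons] at hs
      exact hs.1 _ (by simp)
    show (if p ≤ q then v + (w - v) * (p - p) / (q - p) else pl ((q, w) :: rest') p) = v
    simp [hpq.le]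

lemma pl_node (l : List (ℝ × ℝ)) (hs : (l.map Prod.fst).Pairwise (· < ·))
    (p v : ℝ) (hm : (p, v) ∈ l) : pl l p = v := by
  induction l with
  | nil => simp at hm
  | cons a l ih =>
    rcases List.mem_cons.1 hm with rfl | hm'
    · exact pl_head p v l hs
    · obtain ⟨p₁, v₁⟩ := a
      rcases l with _ | ⟨⟨q, w⟩, rest⟩
      · simp at hm'
      · simp only [map_cons, pairwise_cons] at hs
        have hqp : q ≤ p := by
          rcases List.mem_cons.1 hm' with h | h
          · simp at h; exact h.1.ge
          · exact (hs.2.1 _ (mem_map_of_mem (f := Prod.fst) h)).le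
        have hp₁q : p₁ < q := hs.1 _ (by simp)
        show (if p ≤ q then v₁ + (w - v₁) * (p - p₁) / (q - p₁) else pl ((q, w) :: rest) p) = v
        rcases eq_or_lt_of_le hqp with h | h
        · subst h
          have hvw : v = w := by
            rcases List.mem_cons.1 hm' with h | h
            · simpa using h
            · exact absurd (hs.2.1 _ (mem_map_of_mem (f := Prod.fst) h)) (lt_irrefl _)
          subst hvw
          have : q - p₁ ≠ 0 := by linarith
          field_simp; simp
        · rw [if_neg (not_le.2 h)]
          exact ih (pairwise_cons.2 hs.2) hm'

lemma pl_continuous (l : List (ℝ × ℝ)) (hs : (l.map Prod.fst).Pairwise (· < ·)) :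
    Continuous (pl l) := by
  induction l with
  | nil => simpa [pl] using continuous_const
  | cons a l ih =>
    obtain ⟨p, v⟩ := a
    rcases l with _ | ⟨⟨q, w⟩, rest⟩
    · simpa [pl] using continuous_const
    · simp only [map_cons, pairwise_cons] at hs
      have hpq : p < q := hs.1 _ (by simp)
      have hs' : (((q,w) :: rest).map Prod.fst).Pairwise (· < ·) := pairwise_cons.2 hs.2
      show Continuous fun x => if x ≤ q then v + (w - v) * (x - p) / (q - p)
        else pl ((q, w) :: rest) x
      refine Continuous.if_le ?_ (ih hs') continuous_id continuous_const ?_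
      · fun_prop
      · intro x hx
        rw [hx, pl_head q w rest hs']
        have : q - p ≠ 0 := by linarith
        field_simp; ring

lemma convex_between (v w t : ℝ) (h0 : 0 ≤ t) (h1 : t ≤ 1) :
    min v w ≤ v + (w - v) * t ∧ v + (w - v) * t ≤ max v w := by
  rcases le_total v w with h | h
  · rw [min_eq_left h, max_eq_right h]
    constructor <;> nlinarith
  · rw [min_eq_right h, max_eq_left h]
    constructor <;> nlinarith

lemma pl_between (l : List (ℝ × ℝ)) (hs : (l.map Prod.fst).Pairwise (· < ·)) (x : ℝ)
    (h2 : 2 ≤ l.length) (hx1 : (l[0]'(by omega)).1 ≤ x)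
    (hx2 : x ≤ (l[l.length - 1]'(by omega)).1) :
    ∃ i : ℕ, ∃ h : i + 1 < l.length, (l[i]'(by omega)).1 ≤ x ∧ x ≤ (l[i+1]'h).1 ∧
      min (l[i]'(by omega)).2 ((l[i+1]'h).2) ≤ pl l x ∧
      pl l x ≤ max (l[i]'(by omega)).2 ((l[i+1]'h).2) := by
  induction l with
  | nil => simp at h2
  | cons a l ih =>
    obtain ⟨p, v⟩ := a
    rcases l with _ | ⟨⟨q, w⟩, rest⟩
    · simp at h2
    · simp only [map_cons, pairwise_cons] at hs
      have hpq : p < q := hs.1 _ (by simp)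
      have hplx : pl ((p,v) :: (q,w) :: rest) x =
          if x ≤ q then v + (w - v) * (x - p) / (q - p) else pl ((q, w) :: rest) x := rfl
      by_cases hq : x ≤ q
      · refine ⟨0, by simp, ?_, ?_, ?_, ?_⟩
        · simpa using hx1
        · simpa using hq
        all_goals {
          simp only [hplx, if_pos hq, List.getElem_cons_zero, List.getElem_cons_succ]
          have hx1' : p ≤ x := by simpa using hx1
          have h0 : (0:ℝ) ≤ (x - p) / (q - p) := by
            apply div_nonneg <;> linarith
          have h1 : (x - p) / (q - p) ≤ 1 := by
            rw [div_le_one (by linarith)]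
            linarith
          have := convex_between v w _ h0 h1
          rw [mul_div_assoc]
          first
          | exact this.1
          | exact this.2 }
      · push_neg at hq
        have hrest : rest ≠ [] := by
          rintro rfl
          simp at hx2
          linarith
        have hrl : 0 < rest.length := List.length_pos_iff.2 hrest
        have h2' : 2 ≤ ((q,w) :: rest).length := by
          simp only [List.length_cons]
          omega
        have hx2' : x ≤ (((q,w) :: rest)[((q,w) :: rest).length - 1]'(by omega)).1 := by
          simp only [List.length_cons, Nat.add_sub_cancel, List.getElem_cons_succ] at hx2 ⊢
          exact hx2
        obtain ⟨i, hi, ha, hb, hc, hd⟩ := ih (pairwise_cons.2 hs.2) h2'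
          (by simpa using hq.le) hx2'
        refine ⟨i + 1, by simpa using Nat.succ_lt_succ hi, ?_, ?_, ?_, ?_⟩ <;>
          simp only [hplx, if_neg (not_le.2 hq), List.getElem_cons_succ] <;> assumption


lemma foldr_min_pos (l : List ℝ) (h : ∀ a ∈ l, 0 < a) : 0 < l.foldr min 1 := by
  induction l with
  | nil => norm_num
  | cons a l ih =>
    simp only [List.foldr_cons]
    exact lt_min (h a (by simp)) (ih fun b hb => h b (by simp [hb]))

lemma foldr_min_le (l : List ℝ) (a : ℝ) (h : a ∈ l) : l.foldr min 1 ≤ a := by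
  induction l with
  | nil => simp at h
  | cons b l ih =>
    simp only [List.foldr_cons]
    rcases List.mem_cons.1 h with rfl | h
    · exact min_le_left _ _
    · exact le_trans (min_le_right _ _) (ih h)

lemma le_foldr_max (l : List ℝ) (a : ℝ) (h : a ∈ l) : a ≤ l.foldr max 0 := by
  induction l with
  | nil => simp at h
  | cons b l ih =>
    simp only [List.foldr_cons]
    rcases List.mem_cons.1 h with rfl | h
    · exact le_max_left _ _
    · exact le_trans (ih h) (le_max_right _ _)

lemma gaps_length (l : List ℝ) : (gaps l).length = l.length - 1 := by
  simp [gaps]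

lemma gap_mem (l : List ℝ) (i : ℕ) (h : i + 1 < l.length) :
    (l[i+1]'h) - (l[i]'(by omega)) ∈ gaps l := by
  have hi : i < (gaps l).length := by rw [gaps_length]; omega
  have : (gaps l)[i]'hi = (l[i+1]'h) - (l[i]'(by omega)) := by
    simp [gaps, List.getElem_zipWith, List.getElem_tail]
  rw [← this]
  exact List.getElem_mem hi

lemma gaps_pos (l : List ℝ) (hs : l.Chain' (· < ·)) : ∀ g ∈ gaps l, 0 < g := by
  intro g hg
  obtain ⟨i, hi, rfl⟩ := List.mem_iff_getElem.1 hg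
  rw [gaps_length] at hi
  have : (gaps l)[i]'(by rw [gaps_length]; omega) = (l[i+1]'(by omega)) - (l[i]'(by omega)) := by
    simp [gaps, List.getElem_zipWith, List.getElem_tail]
  rw [this]
  have := List.chain'_iff_get.1 hs i (by omega)
  simp only [List.get_eq_getElem] at this
  linarith

lemma minGap_pos (l : List ℝ) (hs : l.Chain' (· < ·)) : 0 < minGap l :=
  foldr_min_pos _ (gaps_pos l hs)

lemma minGap_le_maxGap (l : List ℝ) (hs : l.Chain' (· < ·)) (h2 : 2 ≤ l.length) :
    minGap l ≤ maxGap l := by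
  have h : (l[1]'(by omega)) - (l[0]'(by omega)) ∈ gaps l := gap_mem l 0 (by omega)
  exact le_trans (foldr_min_le _ _ h) (le_foldr_max _ _ h)

lemma floor_ne_of_gap (h a b : ℝ) (hh : 0 < h) (hab : h < |b - a|) :
    ⌊b / h⌋ ≠ ⌊a / h⌋ := by
  intro he
  have h1 : b / h - a / h < 1 := by
    have := Int.lt_floor_add_one (b / h)
    have := Int.floor_le (a / h)
    rw [he] at *
    push_cast at *
    linarith
  have h2 : a / h - b / h < 1 := by
    have := Int.lt_floor_add_one (a / h)
    have := Int.floor_le (b / h)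
    rw [he] at *
    push_cast at *
    linarith
  have hba : b - a < h := by
    have : (b - a) / h < 1 := by rw [sub_div]; exact h1
    linarith [(div_lt_one hh).1 this]
  have hab' : a - b < h := by
    have : (a - b) / h < 1 := by rw [sub_div]; exact h2
    linarith [(div_lt_one hh).1 this]
  have : |b - a| < h := abs_sub_lt_iff.2 ⟨hba, hab'⟩
  linarith

lemma zero_notin_qcode (f : CI) (X : List ℝ) (hs : X.Chain' (· < ·))
    (hc : X.Chain' fun a b => minGap X < |evalI f b - evalI f a|) :
    (0 : ℤ) ∉ qcode f X (minGap X) := by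
  intro h0
  unfold qcode at h0
  obtain ⟨z, hz, hsign⟩ := List.mem_map.1 h0
  have hz0 : z = 0 := Int.sign_eq_zero_iff_zero.1 hsign
  subst hz0
  unfold Qcode intDiffs at hz
  obtain ⟨i, hi, he⟩ := List.mem_iff_getElem.1 hz
  simp only [List.length_zipWith, List.length_tail, List.length_map] at hi
  have hi2 : i + 1 < X.length := by omega
  rw [List.getElem_zipWith] at he
  rw [List.getElem_tail] at he
  simp only [List.getElem_map] at he
  have hgap := List.chain'_iff_get.1 hc i (by omega)
  simp only [List.get_eq_getElem] at hgap
  exact floor_ne_of_gap _ _ _ (minGap_pos X hs) hgap (by omega)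


lemma isOpen_chainSet (X : List ℝ) (h : ℝ) :
    IsOpen {f : CI | X.Chain' fun a b => h < |evalI f b - evalI f a|} := by
  have hset : {f : CI | X.Chain' fun a b => h < |evalI f b - evalI f a|} =
      ⋂ i : Fin (X.length - 1),
        {f : CI | h < |evalI f (X.get ⟨(i:ℕ)+1, by omega⟩) - evalI f (X.get ⟨(i:ℕ), by omega⟩)|} := by
    ext f
    simp only [Set.mem_iInter, Set.mem_setOf_eq]
    rw [List.chain'_iff_get]
    constructor
    · intro hf i
      exact hf i i.2
    · intro hf i hi
      exact hf ⟨i, hi⟩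
  rw [hset]
  apply isOpen_iInter_of_finite
  intro i
  have hc : Continuous fun f : CI =>
      |evalI f (X.get ⟨(i:ℕ)+1, by omega⟩) - evalI f (X.get ⟨(i:ℕ), by omega⟩)| := by
    apply Continuous.abs
    exact (continuous_eval_const _).sub (continuous_eval_const _)
  exact isOpen_lt continuous_const hc

lemma length_ge_two (l : List ℝ) (h0 : l.head? = some 0) (h1 : l.getLast? = some 1) :
    2 ≤ l.length := by
  rcases l with _ | ⟨a, _ | ⟨b, t⟩⟩
  · simp at h0
  · simp only [List.head?_cons, Option.some_inj] at h0
    simp only [List.getLast?_singleton, Option.some_inj] at h1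
    rw [h0] at h1; norm_num at h1
  · simp only [List.length_cons]; omega

lemma evalI_of_mem (f : CI) (x : ℝ) (hx : x ∈ I01) : evalI f x = f ⟨x, hx⟩ := by
  unfold evalI
  rw [Set.projIcc_of_mem _ hx]

lemma dense_S (D : DiscretizationSystem) (N : ℕ) :
    Dense (⋃ n, ⋃ (_ : N ≤ n),
      {f : CI | (D.X n).Chain' fun a b => minGap (D.X n) < |evalI f b - evalI f a|}) := by
  rw [Metric.dense_iff]
  intro g ε hε
  set c : ℝ := ε / 4 with hc_def
  have hc : 0 < c := by positivity
  -- uniform continuity of g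
  have hu : UniformContinuous (g : I01 → ℝ) :=
    CompactSpace.uniformContinuous_of_continuous g.continuous
  obtain ⟨δ, hδ, himp⟩ := Metric.uniformContinuous_iff.1 hu (c / 2) (by positivity)
  -- pick n
  obtain ⟨n, hnN, hmax⟩ := ((eventually_ge_atTop N).and
    ((D.maxres_to_zero).eventually_lt_const (lt_min hδ hc))).exists
  set L := D.X n with hL_def
  have hs : L.Chain' (· < ·) := D.sorted n
  have hpw : L.Pairwise (· < ·) := List.isChain_iff_pairwise.1 hs
  have hlen2 : 2 ≤ L.length := length_ge_two L (D.head_eq n) (D.last_eq n)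
  have hmaxδ : maxGap L < δ := lt_of_lt_of_le hmax (min_le_left _ _)
  have hmaxc : maxGap L < c := lt_of_lt_of_le hmax (min_le_right _ _)
  -- the perturbed node values
  set pairs : List (ℝ × ℝ) :=
    (L.zipIdx.map Prod.swap).map (fun iz => (iz.2, evalI g iz.2 + (-1) ^ iz.1 * c)) with hpairs_def
  have hfst : pairs.map Prod.fst = L := by
    rw [hpairs_def, List.map_map]
    simp [Function.comp_def]
  have hplen : pairs.length = L.length := by simp [hpairs_def]
  have hpget : ∀ i (h : i < L.length),
      pairs[i]'(by omega) = (L[i]'h, evalI g (L[i]'h) + (-1) ^ i * c) := by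
    intro i h
    simp [hpairs_def, List.getElem_map, List.getElem_zipIdx]
  have hsp : (pairs.map Prod.fst).Pairwise (· < ·) := by rw [hfst]; exact hpw
  have hmem : ∀ i (h : i < L.length), (L[i]'h) ∈ I01 :=
    fun i h => D.mem_Icc n _ (List.getElem_mem h)
  -- the perturbed function
  set F : CI := ⟨fun t => pl pairs t.1,
    (pl_continuous pairs hsp).comp continuous_subtype_val⟩ with hF_def
  have hevalF : ∀ x (hx : x ∈ I01), evalI F x = pl pairs x := by
    intro x hx
    rw [evalI_of_mem F x hx]
    rfl
  have hnode : ∀ i (h : i < L.length),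
      evalI F (L[i]'h) = evalI g (L[i]'h) + (-1) ^ i * c := by
    intro i h
    rw [hevalF _ (hmem i h)]
    show pl pairs (L[i]'h) = _
    exact pl_node pairs hsp _ _ (by rw [← hpget i h]; exact List.getElem_mem (by omega))
  -- gaps are small
  have hgapsmall : ∀ i (h : i + 1 < L.length), (L[i+1]'h) - (L[i]'(by omega)) < δ :=
    fun i h => lt_of_le_of_lt (le_foldr_max _ _ (gap_mem L i h)) hmaxδ
  have hgpos : ∀ i (h : i + 1 < L.length), 0 < (L[i+1]'h) - (L[i]'(by omega)) := by
    intro i h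
    have := List.chain'_iff_get.1 hs i (by omega)
    simp only [List.get_eq_getElem] at this
    linarith
  -- oscillation of g over small intervals
  have hosc : ∀ x y (hx : x ∈ I01) (hy : y ∈ I01), |x - y| < δ →
      |evalI g x - evalI g y| < c / 2 := by
    intro x y hx hy hxy
    rw [evalI_of_mem g x hx, evalI_of_mem g y hy]
    have : dist (⟨x, hx⟩ : I01) ⟨y, hy⟩ < δ := by
      rw [Subtype.dist_eq, Real.dist_eq]; exact hxy
    have := himp this
    rwa [Real.dist_eq] at this
  have habs1 : |(-1 : ℝ)| = 1 := by norm_num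
  -- the chain condition for F
  have hchain : L.Chain' fun a b => minGap L < |evalI F b - evalI F a| := by
    rw [List.chain'_iff_get]
    intro i hi
    simp only [List.get_eq_getElem]
    have h1 : i + 1 < L.length := by omega
    have hd : |evalI g (L[i+1]'h1) - evalI g (L[i]'(by omega))| < c / 2 := by
      apply hosc _ _ (hmem _ _) (hmem _ _)
      rw [abs_of_pos (hgpos i h1)]
      exact hgapsmall i h1
    rw [hnode (i+1) h1, hnode i (by omega)]
    set s : ℝ := (-1) ^ i with hs_def
    have hss : |s| = 1 := by rw [hs_def, abs_pow, habs1, one_pow]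
    have he : evalI g (L[i+1]'h1) + (-1) ^ (i+1) * c -
        (evalI g (L[i]'(by omega)) + (-1) ^ i * c) =
        (evalI g (L[i+1]'h1) - evalI g (L[i]'(by omega))) - 2 * s * c := by
      rw [pow_succ]
      ring
    rw [he]
    have h2sc : |2 * s * c| = 2 * c := by
      rw [abs_mul, abs_mul, hss]
      rw [abs_of_pos hc]
      norm_num
    have key := abs_sub_abs_le_abs_sub (2 * s * c)
      (evalI g (L[i+1]'h1) - evalI g (L[i]'(by omega)))
    rw [show 2 * s * c - (evalI g (L[i+1]'h1) - evalI g (L[i]'(by omega))) =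
      -((evalI g (L[i+1]'h1) - evalI g (L[i]'(by omega))) - 2 * s * c) by ring,
      abs_neg] at key
    have hmm : minGap L ≤ maxGap L := minGap_le_maxGap L hs hlen2
    rw [h2sc] at key
    linarith
  -- F is close to g
  have hdist : dist F g < ε := by
    rw [ContinuousMap.dist_lt_iff hε]
    intro t
    have h2p : 2 ≤ pairs.length := by omega
    have hL0 : (L[0]'(by omega)) = 0 := by
      have hne : L ≠ [] := by intro h; rw [h] at hlen2; simp at hlen2
      have := List.head?_eq_head hne
      rw [D.head_eq n] at this
      rw [List.getElem_zero (by omega)]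
      exact (Option.some_inj.1 this).symm
    have hL1 : (L[L.length - 1]'(by omega)) = 1 := by
      have hne : L ≠ [] := by intro h; rw [h] at hlen2; simp at hlen2
      have := List.getLast?_eq_getLast hne
      rw [D.last_eq n] at this
      rw [← List.getLast_eq_getElem hne]
      exact (Option.some_inj.1 this).symm
    have hx1 : (pairs[0]'(by omega)).1 ≤ t.1 := by
      rw [hpget 0 (by omega)]
      simp only
      rw [hL0]
      exact t.2.1
    have hx2 : t.1 ≤ (pairs[pairs.length - 1]'(by omega)).1 := by
      have e : pairs.length - 1 = L.length - 1 := by omega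
      have h' : pairs.length - 1 < L.length := by omega
      have : (pairs[pairs.length - 1]'(by omega)) =
          (L[pairs.length - 1]'(by omega),
            evalI g (L[pairs.length - 1]'(by omega)) + (-1) ^ (pairs.length - 1) * c) :=
        hpget _ (by omega)
      rw [this]
      simp only
      have : (L[pairs.length - 1]'(by omega)) = (L[L.length - 1]'(by omega)) := by
        congr 1
      rw [this, hL1]
      exact t.2.2
    obtain ⟨i, hip, hta, htb, hcmin, hcmax⟩ := pl_between pairs hsp t.1 h2p hx1 hx2
    have hiL : i + 1 < L.length := by omega
    rw [hpget i (by omega)] at hta hcmin hcmax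
    rw [hpget (i+1) (by omega)] at htb hcmin hcmax
    simp only at hta htb hcmin hcmax
    set a := L[i]'(by omega) with ha_def
    set b := L[i+1]'hiL with hb_def
    have htmem : t.1 ∈ I01 := t.2
    have hat : |a - t.1| < δ := by
      have := hgapsmall i hiL
      rw [abs_sub_comm, abs_of_nonneg (by linarith)]
      linarith
    have hbt : |b - t.1| < δ := by
      have := hgapsmall i hiL
      rw [abs_of_nonneg (by linarith)]
      linarith
    have hga : |evalI g a - evalI g t.1| < c / 2 := hosc _ _ (hmem _ _) htmem hat
    have hgb : |evalI g b - evalI g t.1| < c / 2 := hosc _ _ (hmem _ _) htmem hbt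
    have hgt : evalI g t.1 = g t := by
      rw [evalI_of_mem g t.1 htmem]
    have hsc : |(-1 : ℝ) ^ i * c| = c := by
      rw [abs_mul, abs_pow, habs1, one_pow, one_mul, abs_of_pos hc]
    have hsc' : |(-1 : ℝ) ^ (i+1) * c| = c := by
      rw [abs_mul, abs_pow, habs1, one_pow, one_mul, abs_of_pos hc]
    -- bound |F t - g t|
    have hFt : (F t : ℝ) = pl pairs t.1 := rfl
    rw [Real.dist_eq, hFt]
    have hva := abs_lt.1 hga
    have hvb := abs_lt.1 hgb
    have hsa := abs_le.1 hsc.le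
    have hsb := abs_le.1 hsc'.le
    rw [hgt] at hva hvb
    have hmin : min (evalI g a + (-1)^i * c) (evalI g b + (-1)^(i+1) * c) ≤ pl pairs t.1 :=
      hcmin
    have hmax' : pl pairs t.1 ≤ max (evalI g a + (-1)^i * c) (evalI g b + (-1)^(i+1) * c) :=
      hcmax
    rw [abs_lt]
    rcases le_total (evalI g a + (-1)^i * c) (evalI g b + (-1)^(i+1) * c) with h | h
    · rw [min_eq_left h] at hmin
      rw [max_eq_right h] at hmax'
      constructor <;> [skip; skip] <;>
        (first | linarith [hsa.1, hsa.2, hva.1, hva.2] |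
                 linarith [hsb.1, hsb.2, hvb.1, hvb.2])
    · rw [min_eq_right h] at hmin
      rw [max_eq_left h] at hmax'
      constructor <;> [skip; skip] <;>
        (first | linarith [hsa.1, hsa.2, hva.1, hva.2] |
                 linarith [hsb.1, hsb.2, hvb.1, hvb.2])
  exact ⟨F, Metric.mem_ball.2 hdist, Set.mem_iUnion.2 ⟨n, Set.mem_iUnion.2 ⟨hnN, hchain⟩⟩⟩


/-- for a residual set of `f`, infinitely often all consecutive
increments of `f` along `X_n` exceed `h_n`, and consequently infinitely often the
qualitative code contains no `0`. -/
theorem stmt8 (D : DiscretizationSystem) :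
    {f : CI |
      (∃ᶠ n in atTop, (D.X n).Chain'
        fun a b => minGap (D.X n) < |evalI f b - evalI f a|) ∧
      (∃ᶠ n in atTop, (0 : ℤ) ∉ qcode f (D.X n) (minGap (D.X n)))} ∈
      residual CI := by
  have hA : (⋂ N : ℕ, ⋃ n, ⋃ (_ : N ≤ n),
      {f : CI | (D.X n).Chain' fun a b => minGap (D.X n) < |evalI f b - evalI f a|}) ∈
      residual CI := by
    rw [countable_iInter_mem]
    intro N
    exact residual_of_dense_open
      (isOpen_iUnion fun n => isOpen_iUnion fun _ => isOpen_chainSet (D.X n) (minGap (D.X n)))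
      (dense_S D N)
  apply Filter.mem_of_superset hA
  intro f hf
  simp only [Set.mem_iInter, Set.mem_iUnion, Set.mem_setOf_eq] at hf
  have hfreq : ∃ᶠ n in atTop,
      (D.X n).Chain' fun a b => minGap (D.X n) < |evalI f b - evalI f a| :=
    Filter.frequently_atTop.2 fun N => by
      obtain ⟨n, hn, hc⟩ := hf N
      exact ⟨n, hn, hc⟩
  exact ⟨hfreq, hfreq.mono fun n hn => zero_notin_qcode f (D.X n) (D.sorted n) hn⟩
end
end
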